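/- Let (F₀*, F₁*) be a compatible couple equipped with a predual couple (F₀, F₁), let f : closure(S) → F₀*+F₁* be weak*-continuous on the closed strip closure(S) = {z : 0 ≤ Re z ≤ 1}, weak*-holomorphic on the open strip, with f(j+it) ∈ Fⱼ* and sup_{t∈ℝ} ‖f(j+it)‖_{Fⱼ*} ≤ C for j = 0,1. Then for every 0 < θ < 1 and every t > 0 one has K_t(f(θ), F₀*, F₁*) ≤ C·t^θ; in particular f(θ) ∈ (F₀*, F₁*)_{θ,∞,K} with ‖f(θ)‖_{(F₀*,F₁*)_{θ,∞,K}} ≤ C. -/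

import Mathlib

open Complex

theorem stmt5 {X : Type*} [AddCommGroup X] [Module ℂ X]
    (F0 F1 : Set X) (N0 N1 : X → ℝ) (C : ℝ) (hC : 0 ≤ C)
    (f : ℂ → (X →ₗ[ℂ] ℂ))
    -- weak*-continuity on the closed strip
    (hcont : ∀ u ∈ F0 ∩ F1,
      ContinuousOn (fun z => f z u) {z : ℂ | 0 ≤ z.re ∧ z.re ≤ 1})
    -- weak*-holomorphy on the open strip
    (hholo : ∀ u ∈ F0 ∩ F1,
      DifferentiableOn ℂ (fun z => f z u) {z : ℂ | 0 < z.re ∧ z.re < 1})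
    -- boundedness (f belongs to the class 𝓕_*)
    (hbdd : ∀ u ∈ F0 ∩ F1, ∃ B : ℝ, ∀ z : ℂ, 0 ≤ z.re → z.re ≤ 1 →
      ‖f z u‖ ≤ B)
    -- boundary bounds: ‖f(it)‖_{F₀*} ≤ C and ‖f(1+it)‖_{F₁*} ≤ C
    (h0 : ∀ (t : ℝ), ∀ u ∈ F0 ∩ F1,
      ‖f (Complex.I * (t : ℂ)) u‖ ≤ C * N0 u)
    (h1 : ∀ (t : ℝ), ∀ u ∈ F0 ∩ F1,
      ‖f (1 + Complex.I * (t : ℂ)) u‖ ≤ C * N1 u) :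
    ∀ θ : ℝ, 0 < θ → θ < 1 → ∀ t : ℝ, 0 < t →
      -- K_t(f(θ), F₀*, F₁*) ≤ C·t^θ, via the duality formula for K_t:
      (∀ u ∈ F0 ∩ F1, N0 u ≤ 1 → N1 u ≤ t →
        ‖f (θ : ℂ) u‖ ≤ C * t ^ θ) ∧
      sSup {r : ℝ | ∃ u ∈ F0 ∩ F1, N0 u ≤ 1 ∧ N1 u ≤ t ∧
        r = ‖f (θ : ℂ) u‖} ≤ C * t ^ θ := by
  intro θ hθ0 hθ1 t ht
  have hCt : (0:ℝ) ≤ C * t ^ θ :=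
    mul_nonneg hC (Real.rpow_nonneg ht.le θ)
  have key : ∀ u ∈ F0 ∩ F1, N0 u ≤ 1 → N1 u ≤ t →
      ‖f (θ : ℂ) u‖ ≤ C * t ^ θ := by
    intro u hu hN0 hN1
    set g : ℂ → ℂ := fun z => f z u with hg
    have hsub : Complex.HadamardThreeLines.verticalClosedStrip 0 1 ⊆
        {z : ℂ | 0 ≤ z.re ∧ z.re ≤ 1} := fun z hz => ⟨hz.1, hz.2⟩
    have hclosure : closure (Complex.HadamardThreeLines.verticalStrip 0 1) ⊆
        Complex.HadamardThreeLines.verticalClosedStrip 0 1 := by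
      have : Complex.HadamardThreeLines.verticalStrip 0 1 ⊆
          Complex.HadamardThreeLines.verticalClosedStrip 0 1 :=
        fun z hz => ⟨hz.1.le, hz.2.le⟩
      refine closure_minimal this ?_
      exact IsClosed.preimage Complex.continuous_re isClosed_Icc
    have hd : DiffContOnCl ℂ g (Complex.HadamardThreeLines.verticalStrip 0 1) := by
      constructor
      · exact (hholo u hu).mono (fun z hz => ⟨hz.1, hz.2⟩)
      · exact (hcont u hu).mono (fun z hz => hsub (hclosure hz))
    have hB : BddAbove ((norm ∘ g) '' (Complex.HadamardThreeLines.verticalClosedStrip 0 1)) := by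
      obtain ⟨B, hBle⟩ := hbdd u hu
      refine ⟨B, ?_⟩
      rintro r ⟨z, hz, rfl⟩
      exact hBle z hz.1 hz.2
    have ha : ∀ z ∈ Complex.re ⁻¹' {(0:ℝ)}, ‖g z‖ ≤ C := by
      intro z hz
      have hz0 : (z.re : ℝ) = 0 := hz
      have hzeq : z = Complex.I * (z.im : ℂ) := by
        apply Complex.ext <;> simp [hz0]
      calc ‖g z‖ = ‖f (Complex.I * (z.im : ℂ)) u‖ := by rw [hg]; simp [← hzeq]
        _ ≤ C * N0 u := h0 z.im u hu
        _ ≤ C * 1 := by exact mul_le_mul_of_nonneg_left hN0 hC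
        _ = C := mul_one C
    have hb : ∀ z ∈ Complex.re ⁻¹' {(1:ℝ)}, ‖g z‖ ≤ C * t := by
      intro z hz
      have hz1 : (z.re : ℝ) = 1 := hz
      have hzeq : z = 1 + Complex.I * (z.im : ℂ) := by
        apply Complex.ext <;> simp [hz1]
      calc ‖g z‖ = ‖f (1 + Complex.I * (z.im : ℂ)) u‖ := by rw [hg]; simp [← hzeq]
        _ ≤ C * N1 u := h1 z.im u hu
        _ ≤ C * t := mul_le_mul_of_nonneg_left hN1 hC
    have hmem : (θ : ℂ) ∈ Complex.HadamardThreeLines.verticalClosedStrip 0 1 := by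
      simp [Complex.HadamardThreeLines.verticalClosedStrip]
      exact ⟨hθ0.le, hθ1.le⟩
    have := Complex.HadamardThreeLines.norm_le_interp_of_mem_verticalClosedStrip'
      (f := g) (by norm_num) hmem hd hB ha hb
    have hre : ((θ : ℂ)).re = θ := by simp
    rw [hre] at this
    calc ‖f (θ : ℂ) u‖ = ‖g (θ : ℂ)‖ := rfl
      _ ≤ C ^ (1 - θ) * (C * t) ^ θ := by rw [sub_zero, sub_zero, div_one] at this; exact this
      _ = C * t ^ θ := by
          rw [Real.mul_rpow hC ht.le, ← mul_assoc, ← Real.rpow_add' hC (by norm_num)]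
          simp
  refine ⟨key, ?_⟩
  apply Real.sSup_le _ hCt
  rintro r ⟨u, hu, hN0, hN1, rfl⟩
  exact key u hu hN0 hN1
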